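/- Turning the input string into the initial configuration: for every deterministic binary Turing machine with input M = (Q, s_in, s_T, s_F, δ) there is a closed λ-term init of Λ_det such that for every value k and every input string i ∈ B_I* of the form L·s'·R with s' ∈ B*, init k ⟨i⟩ →det^m k ⟨C_in(i)⟩, where m is a constant (m = 5) independent of i and k, and C_in(i) = (i, 0 | ε, □, ε | s_in) is the initial configuration of M on i. -/

import Mathlib

namespace LogTM

/-- Untyped λ-terms with de Bruijn indices. -/
inductive Lam : Type
  | var : ℕ → Lam
  | lam : Lam → Lam
  | app : Lam → Lam → Lam

namespace Lam

/-- Values: variables and abstractions. -/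
def IsValue : Lam → Prop
  | var _ => True
  | lam _ => True
  | app _ _ => False

/-- Terms of the deterministic λ-calculus `Λ_det`:
    the argument of every application is a value. -/
def InDet : Lam → Prop
  | var _ => True
  | lam t => InDet t
  | app t u => InDet t ∧ InDet u ∧ IsValue u

/-- Shift the free variables `≥ d` by one. -/
def lift : ℕ → Lam → Lam
  | d, var n => if n < d then var n else var (n + 1)
  | d, lam t => lam (lift (d + 1) t)
  | d, app t u => app (lift d t) (lift d u)

/-- Capture-avoiding substitution `t[k := u]`. -/
def subst : Lam → ℕ → Lam → Lam
  | var n, k, u => if n < k then var n else if n = k then u else var (n - 1)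
  | lam t, k, u => lam (subst t (k + 1) (lift 0 u))
  | app t s, k, u => app (subst t k u) (subst s k u)

/-- Weak evaluation `→det` of the deterministic λ-calculus: β at the root,
    closed under evaluation contexts `E ::= ⟨·⟩ | E v`. -/
inductive Step : Lam → Lam → Prop
  | beta {t v : Lam} : IsValue v → Step (app (lam t) v) (subst t 0 v)
  | appL {t t' v : Lam} : IsValue v → Step t t' → Step (app t v) (app t' v)

/-- `n`-fold iteration of `→det`. -/
inductive StepN : ℕ → Lam → Lam → Prop
  | refl (t : Lam) : StepN 0 t t
  | head {n : ℕ} {t u r : Lam} : Step t u → StepN n u r → StepN (n + 1) t r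

/-- All free variables are `< d`. -/
def ClosedUnder : ℕ → Lam → Prop
  | d, var n => n < d
  | d, lam t => ClosedUnder (d + 1) t
  | d, app t u => ClosedUnder d t ∧ ClosedUnder d u

/-- Closed terms. -/
def Closed (t : Lam) : Prop := ClosedUnder 0 t

end Lam

/-- `n` nested abstractions. -/
def iterLam : ℕ → Lam → Lam
  | 0, t => t
  | n + 1, t => .lam (iterLam n t)

/-- Left-nested applications. -/
def mkApps : Lam → List Lam → Lam
  | t, [] => t
  | t, u :: us => mkApps (.app t u) us

/-- Scott encoding of the character `a` of a `k`-letter (ordered) alphabet: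
    `⟨a_i⟩ = λx_1…λx_k.x_i`. -/
def encChar (k : ℕ) (a : Fin k) : Lam := iterLam k (.var (k - 1 - (a : ℕ)))

/-- Scott encoding of strings over a `k`-letter (ordered) alphabet:
    `⟨ε⟩ = λx_1…λx_k.λx_ε.x_ε` and `⟨a_i·r⟩ = λx_1…λx_k.λx_ε.x_i ⟨r⟩`. -/
def encStr (k : ℕ) : List (Fin k) → Lam
  | [] => iterLam (k + 1) (.var 0)
  | a :: r => iterLam (k + 1) (.app (.var (k - (a : ℕ))) (encStr k r))

/-- Scott encoding of binary strings (alphabet `{0,1}`, `false = 0 < 1 = true`). -/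
def encBits : List Bool → Lam
  | [] => .lam (.lam (.lam (.var 0)))
  | false :: s => .lam (.lam (.lam (.app (.var 2) (encBits s))))
  | true :: s => .lam (.lam (.lam (.app (.var 1) (encBits s))))

/-- Successor on reversed binary strings. -/
def rsucc : List Bool → List Bool
  | [] => [true]
  | false :: s => true :: s
  | true :: s => false :: rsucc s

/-- Predecessor on (nonempty) reversed binary strings. -/
def rpred : List Bool → List Bool
  | [] => []
  | false :: s => true :: rpred s
  | [true] => []
  | true :: b :: s => false :: b :: s

/-- Lookup of the `(n+1)`-th character of a string using a reversed-binary counter. -/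
def rlookup {α : Type*} : List Bool → List α → Option α
  | _, [] => none
  | [], c :: _ => some c
  | b :: nb, _ :: s => rlookup (rpred (b :: nb)) s

/-- Input alphabet `B_I = {0, 1, L, R}`. -/
inductive BI : Type
  | b0 | b1 | bL | bR

/-- Work alphabet `B_W = {0, 1, □}`. -/
inductive BW : Type
  | w0 | w1 | wB

/-- Input head moves `{-1, +1, 0}`. -/
inductive IDir : Type
  | minus | plus | zero

/-- Work head moves `{←, →, ↓}`. -/
inductive WDir : Type
  | left | right | stay

/-- A deterministic binary Turing machine with input: states `Fin Q`, initial state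
    `qin`, final states `qT` and `qF`, and a partial transition function `δ` that is
    undefined on the final states. -/
structure TM where
  Q : ℕ
  qin : Fin Q
  qT : Fin Q
  qF : Fin Q
  δ : BI → BW → Fin Q → Option (IDir × BW × WDir × Fin Q)
  δ_final : ∀ b a s, (s = qT ∨ s = qF) → δ b a s = none

/-- A configuration `(i, n | w_l, a, w_r | s)`: read-only input `i`, input-head
    position `n`, work tape `w_l, a, w_r` (head on `a`), current state `s`. -/
structure Config (M : TM) where
  input : List BI
  pos : ℕ
  left : List BW
  head : BW
  right : List BW
  state : Fin M.Q

/-- Final configurations: the state is `qT` or `qF`. -/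
def Config.Final {M : TM} (C : Config M) : Prop := C.state = M.qT ∨ C.state = M.qF

/-- One machine transition, as a partial function (the relation `C →M D` is
    `M.step C = some D`). -/
def TM.step (M : TM) (C : Config M) : Option (Config M) :=
  match C.input[C.pos]? with
  | none => none
  | some b =>
    match M.δ b C.head C.state with
    | none => none
    | some (d, a', mv, s') =>
      let pos' : ℕ :=
        match d with
        | .minus => C.pos - 1
        | .plus => C.pos + 1
        | .zero => C.pos
      let w : List BW × BW × List BW :=
        match mv with
        | .stay => (C.left, a', C.right)
        | .left =>
          match C.left.getLast? with
          | none => ([], BW.wB, a' :: C.right)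
          | some a'' => (C.left.dropLast, a'', a' :: C.right)
        | .right =>
          match C.right with
          | [] => (C.left ++ [a'], BW.wB, [])
          | a'' :: r => (C.left ++ [a'], a'', r)
      some ⟨C.input, pos', w.1, w.2.1, w.2.2, s'⟩

/-- `n` machine transitions. -/
def TM.multiStep (M : TM) : ℕ → Config M → Option (Config M)
  | 0, C => some C
  | n + 1, C => (M.step C).bind (M.multiStep n)

/-- The fixed ordering `0 < 1 < L < R` of `B_I`. -/
def BI.toFin : BI → Fin 4
  | b0 => 0
  | b1 => 1
  | bL => 2
  | bR => 3

/-- The fixed ordering `0 < 1 < □` of `B_W`. -/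
def BW.toFin : BW → Fin 3
  | w0 => 0
  | w1 => 1
  | wB => 2

/-- Encoding of configurations:
    `⟨C⟩ = λx.(x ⟨i⟩ ⟨n̂⟩ ⟨w_l^R⟩ ⟨a⟩ ⟨w_r⟩ ⟨s⟩)`. -/
def encConfig {M : TM} (C : Config M) : Lam :=
  .lam (mkApps (.var 0)
    [encStr 4 (C.input.map BI.toFin),
     encBits (Nat.bits C.pos),
     encStr 3 (C.left.reverse.map BW.toFin),
     encChar 3 C.head.toFin,
     encStr 3 (C.right.map BW.toFin),
     encChar M.Q C.state])

/-- A bit as an input character. -/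
def bitToBI (b : Bool) : BI := if b then .b1 else .b0

/-- The initial configuration on binary input `i`: input tape `L·i·R`,
    input head at position `0`, empty work tape, initial state. -/
def initConfig (M : TM) (i : List Bool) : Config M :=
  ⟨BI.bL :: (i.map bitToBI) ++ [BI.bR], 0, [], BW.wB, [], M.qin⟩

/-- Scott-encoded booleans: `⟨true⟩ = λx.λy.x`, `⟨false⟩ = λx.λy.y`. -/
def encBool : Bool → Lam
  | true => .lam (.lam (.var 1))
  | false => .lam (.lam (.var 0))



namespace Lam

theorem closedUnder_mono : ∀ {t : Lam} {d e : ℕ}, ClosedUnder d t → d ≤ e → ClosedUnder e t := by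
  intro t
  induction t with
  | var n => intro d e h hde; simp only [ClosedUnder] at *; omega
  | lam t ih => intro d e h hde; exact ih h (by omega)
  | app t u iht ihu => intro d e h hde; exact ⟨iht h.1 hde, ihu h.2 hde⟩

theorem lift_closed : ∀ {t : Lam} {d e : ℕ}, ClosedUnder d t → d ≤ e → lift e t = t := by
  intro t
  induction t with
  | var n => intro d e h hde; simp only [ClosedUnder] at h; simp only [lift]; rw [if_pos (by omega)]
  | lam t ih => intro d e h hde; simp only [lift]; rw [ih h (by omega)]
  | app t u iht ihu => intro d e h hde; simp only [lift]; rw [iht h.1 hde, ihu h.2 hde]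

theorem subst_closed : ∀ {t : Lam} {d k : ℕ} {u : Lam}, ClosedUnder d t → d ≤ k → subst t k u = t := by
  intro t
  induction t with
  | var n => intro d k u h hde; simp only [ClosedUnder] at h; simp only [subst]; rw [if_pos (by omega)]
  | lam t ih => intro d k u h hde; simp only [subst]; rw [ih h (by omega)]
  | app t u iht ihu => intro d k u' h hde; simp only [subst]; rw [iht h.1 hde, ihu h.2 hde]

theorem subst_lift : ∀ (t : Lam) (d : ℕ) (u : Lam), subst (lift d t) d u = t := by
  intro t
  induction t with
  | var n =>
    intro d u
    simp only [lift]
    by_cases h : n < d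
    · rw [if_pos h]; simp only [subst]; rw [if_pos h]
    · rw [if_neg h]; simp only [subst]
      rw [if_neg (by omega), if_neg (by omega)]
      simp
  | lam t ih => intro d u; simp only [lift, subst]; rw [ih]
  | app t u iht ihu => intro d u'; simp only [lift, subst]; rw [iht, ihu]

end Lam

theorem closedUnder_iterLam : ∀ (n : ℕ) {d : ℕ} {t : Lam},
    Lam.ClosedUnder (n + d) t → Lam.ClosedUnder d (iterLam n t) := by
  intro n
  induction n with
  | zero => intro d t h; simpa [iterLam] using h
  | succ n ih =>
    intro d t h
    show Lam.ClosedUnder (d + 1) (iterLam n t)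
    exact ih (by rwa [show n + (d + 1) = n + 1 + d by omega])

theorem encChar_closed (k : ℕ) (a : Fin k) : (encChar k a).Closed := by
  refine closedUnder_iterLam k ?_
  simp only [Lam.ClosedUnder]
  have := a.isLt
  omega

theorem encStr_closed (k : ℕ) : ∀ l : List (Fin k), (encStr k l).Closed := by
  intro l
  induction l with
  | nil =>
    refine closedUnder_iterLam (k + 1) ?_
    simp only [Lam.ClosedUnder]; omega
  | cons a r ih =>
    refine closedUnder_iterLam (k + 1) ?_
    refine ⟨?_, Lam.closedUnder_mono ih (by omega)⟩
    simp only [Lam.ClosedUnder]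
    have := a.isLt
    omega

theorem isValue_iterLam (n : ℕ) (t : Lam) (h : 0 < n) : (iterLam n t).IsValue := by
  cases n with
  | zero => omega
  | succ n => trivial

theorem inDet_iterLam (n : ℕ) (t : Lam) (h : t.InDet) : (iterLam n t).InDet := by
  induction n with
  | zero => exact h
  | succ n ih => exact ih

theorem encChar_inDet (k : ℕ) (a : Fin k) : (encChar k a).InDet :=
  inDet_iterLam _ _ trivial

theorem encStr_isValue (k : ℕ) (l : List (Fin k)) : (encStr k l).IsValue := by
  cases l <;> exact isValue_iterLam _ _ (by omega)

theorem encStr_inDet (k : ℕ) : ∀ l : List (Fin k), (encStr k l).InDet := by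
  intro l
  induction l with
  | nil => exact inDet_iterLam _ _ trivial
  | cons a r ih =>
    refine inDet_iterLam _ _ ?_
    exact ⟨trivial, ih, encStr_isValue _ _⟩

/-- turning the input string into the initial configuration: for every
    Turing machine `M` there is a closed term `init` of `Λ_det` such that for every
    value `k` and every input string `i = L·s·R` (with `s` a binary string),
    `init k ⟨i⟩ →det^5 k ⟨C_in(i)⟩`, where `C_in(i) = (i, 0 | ε, □, ε | s_in)`. -/
theorem init_term_correct (M : TM) :
    ∃ initTm : Lam, initTm.Closed ∧ initTm.InDet ∧
      ∀ kont : Lam, kont.IsValue → kont.InDet → ∀ s : List Bool,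
        Lam.StepN 5
          (.app (.app initTm kont) (encStr 4 ((initConfig M s).input.map BI.toFin)))
          (.app kont (encConfig (initConfig M s))) := by
  have hSc : (encChar M.Q M.qin).Closed := encChar_closed _ _
  have hSval : (encChar M.Q M.qin).IsValue := by
    unfold encChar; exact isValue_iterLam _ _ M.qin.pos
  have hSc7 : Lam.ClosedUnder 6 (encChar M.Q M.qin) := Lam.closedUnder_mono hSc (Nat.zero_le _)
  refine ⟨.lam (.lam (.app (.app (.app
      (.lam (.lam (.lam (.app (.var 0)
        (.lam (.app (.app (.app (.app (.app (.app (.var 0) (.var 4))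
          (.lam (.lam (.lam (.var 0)))))
          (.lam (.lam (.lam (.lam (.var 0))))))
          (.lam (.lam (.lam (.var 0)))))
          (.lam (.lam (.lam (.lam (.var 0))))))
          (encChar M.Q M.qin)))))))
      (.lam (.var 0)))
      (.lam (.var 0)))
      (.var 1))), ?_, ?_, ?_⟩
  · simp [Lam.Closed, Lam.ClosedUnder, hSc7]
  · simp [Lam.InDet, Lam.IsValue, encChar_inDet, hSval]; exact hSval
  · intro kont hv hdet s
    have hIvc : (encStr 4 ((initConfig M s).input.map BI.toFin)).Closed := encStr_closed _ _
    have hIvv : (encStr 4 ((initConfig M s).input.map BI.toFin)).IsValue := encStr_isValue _ _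
    have hIs : ∀ k u, Lam.subst (encStr 4 ((initConfig M s).input.map BI.toFin)) k u
        = encStr 4 ((initConfig M s).input.map BI.toFin) :=
      fun k u => Lam.subst_closed hIvc (Nat.zero_le _)
    have hIl : ∀ e, Lam.lift e (encStr 4 ((initConfig M s).input.map BI.toFin))
        = encStr 4 ((initConfig M s).input.map BI.toFin) :=
      fun e => Lam.lift_closed hIvc (Nat.zero_le _)
    have hSs : ∀ k u, Lam.subst (encChar M.Q M.qin) k u = encChar M.Q M.qin :=
      fun k u => Lam.subst_closed hSc (Nat.zero_le _)
    have hK : Lam.subst (Lam.lift 0 kont) 0 (encStr 4 ((initConfig M s).input.map BI.toFin)) = kont :=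
      Lam.subst_lift _ _ _
    have hconf : encConfig (initConfig M s) = Lam.lam (.app (.app (.app (.app (.app (.app (.var 0)
        (encStr 4 ((initConfig M s).input.map BI.toFin)))
        (.lam (.lam (.lam (.var 0)))))
        (.lam (.lam (.lam (.lam (.var 0))))))
        (.lam (.lam (.lam (.var 0)))))
        (.lam (.lam (.lam (.lam (.var 0))))))
        (encChar M.Q M.qin)) := by
      simp [encConfig, mkApps, encBits, encStr, encChar, iterLam, BW.toFin, initConfig]
    rw [hconf]
    generalize hIvg : encStr 4 ((initConfig M s).input.map BI.toFin) = Iv at hIvc hIvv hIs hIl hK ⊢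
    generalize hSg : encChar M.Q M.qin = Sv at hSs ⊢
    refine Lam.StepN.head (Lam.Step.appL hIvv (Lam.Step.beta hv)) ?_
    simp [Lam.subst, Lam.lift, hIs, hSs, hIl, hK]
    refine Lam.StepN.head (Lam.Step.beta hIvv) ?_
    simp [Lam.subst, Lam.lift, hIs, hSs, hIl, hK]
    refine Lam.StepN.head (Lam.Step.appL hv (Lam.Step.appL (by simp [Lam.IsValue])
      (Lam.Step.beta (by simp [Lam.IsValue])))) ?_
    simp [Lam.subst, Lam.lift, hIs, hSs, hIl, hK]
    refine Lam.StepN.head (Lam.Step.appL hv (Lam.Step.beta (by simp [Lam.IsValue]))) ?_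
    simp [Lam.subst, Lam.lift, hIs, hSs, hIl, hK]
    refine Lam.StepN.head (Lam.Step.beta hv) ?_
    simp [Lam.subst, Lam.lift, hIs, hSs, hIl, hK]
    exact Lam.StepN.refl _

end LogTM
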